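/- For real parameters θ¹, θ² with θ¹+θ² > 0 and θ¹−θ² > 0, the mean of the beta-logistic distribution is ∫_{ℝ} x · p(x;θ¹,θ²) dx = (1/2)·(ψ((θ¹+θ²)/2) − ψ((θ¹−θ²)/2)). -/

import Mathlib

open MeasureTheory Set

/-- The hyperbolic secant function: `sech x = 2 / (eˣ + e⁻ˣ)`. -/
noncomputable def sech (x : ℝ) : ℝ := 1 / Real.cosh x

/-- The beta-logistic density. -/
noncomputable def betaLogisticPDF (θ1 θ2 x : ℝ) : ℝ :=
  (2 : ℝ) ^ (1 - θ1) * sech x ^ θ1 * Real.exp (θ2 * x) /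
    (Real.Gamma ((θ1 - θ2) / 2) * Real.Gamma ((θ1 + θ2) / 2) / Real.Gamma θ1)

/-- The digamma function `ψ(z) = d/dz log Γ(z)`. -/
noncomputable def digamma (z : ℝ) : ℝ := deriv (fun x => Real.log (Real.Gamma x)) z

lemma J1 (u v : ℝ) (hu : -1 < u) (hv : -1 < v) :
    IntegrableOn (fun t : ℝ => t ^ u * (1 - t) ^ v) (Ioo (0:ℝ) 1) := by
  have meas : ∀ s : Set ℝ, s ⊆ Ioo (0:ℝ) 1 → MeasurableSet s →
      AEStronglyMeasurable (fun t : ℝ => t ^ u * (1 - t) ^ v) (volume.restrict s) := by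
    intro s hs hms
    apply ContinuousOn.aestronglyMeasurable _ hms
    intro t ht
    have ht' := hs ht
    have ht0 : t ≠ 0 := ne_of_gt ht'.1
    have ht1 : (1:ℝ) - t ≠ 0 := by have := ht'.2; intro h; linarith [ht'.2]
    exact ((Real.continuousAt_rpow_const t u (Or.inl ht0)).continuousWithinAt.mul
      (((continuous_const.sub continuous_id).continuousAt (x := t)).rpow_const
        (Or.inl ht1)).continuousWithinAt)
  have hbnd : ∀ w : ℝ, ∀ x : ℝ, (1:ℝ)/2 ≤ x → x ≤ 1 → x ^ w ≤ ((1:ℝ)/2) ^ w + 1 := by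
    intro w x hx hx1
    have hx0 : 0 < x := lt_of_lt_of_le (by norm_num) hx
    rcases le_or_gt 0 w with h | h
    · have : x ^ w ≤ (1:ℝ) ^ w := Real.rpow_le_rpow hx0.le hx1 h
      rw [Real.one_rpow] at this
      nlinarith [Real.rpow_pos_of_pos (show (0:ℝ) < 1/2 by norm_num) w]
    · have : x ^ w ≤ ((1:ℝ)/2) ^ w :=
        Real.rpow_le_rpow_of_nonpos (by norm_num) hx h.le
      linarith
  have left : IntegrableOn (fun t : ℝ => t ^ u * (1 - t) ^ v) (Ioo (0:ℝ) (1/2)) := by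
    have base : IntegrableOn (fun t : ℝ => t ^ u) (Ioo (0:ℝ) (1/2)) := by
      have := intervalIntegral.intervalIntegrable_rpow' (a := 0) (b := 1/2) hu
      rwa [intervalIntegrable_iff_integrableOn_Ioo_of_le (by norm_num)] at this
    refine Integrable.mono (base.const_mul (((1:ℝ)/2) ^ v + 1))
      (meas _ (Ioo_subset_Ioo le_rfl (by norm_num)) measurableSet_Ioo) ?_
    filter_upwards [ae_restrict_mem measurableSet_Ioo] with t ht
    have ht0 : 0 < t := ht.1
    have h1t : (1:ℝ)/2 ≤ 1 - t := by linarith [ht.2]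
    have h1t' : (0:ℝ) < 1 - t := by linarith
    rw [Real.norm_eq_abs, Real.norm_eq_abs, abs_mul,
      abs_of_nonneg (Real.rpow_nonneg ht0.le u), abs_of_nonneg (Real.rpow_nonneg h1t'.le v),
      abs_of_nonneg (by positivity)]
    calc t ^ u * (1 - t) ^ v ≤ t ^ u * (((1:ℝ)/2) ^ v + 1) :=
          mul_le_mul_of_nonneg_left (hbnd v _ h1t (by linarith)) (Real.rpow_nonneg ht0.le u)
      _ = (((1:ℝ)/2) ^ v + 1) * t ^ u := by ring
  have right : IntegrableOn (fun t : ℝ => t ^ u * (1 - t) ^ v) (Ioo ((1:ℝ)/2) 1) := by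
    have base : IntegrableOn (fun t : ℝ => (1 - t) ^ v) (Ioo ((1:ℝ)/2) 1) := by
      have h0 := intervalIntegral.intervalIntegrable_rpow' (a := 0) (b := 1/2) hv
      have h1 := (h0.comp_sub_left 1).symm
      norm_num at h1
      rwa [intervalIntegrable_iff_integrableOn_Ioo_of_le (by norm_num)] at h1
    refine Integrable.mono (base.const_mul (((1:ℝ)/2) ^ u + 1))
      (meas _ (Ioo_subset_Ioo (by norm_num) le_rfl) measurableSet_Ioo) ?_
    filter_upwards [ae_restrict_mem measurableSet_Ioo] with t ht
    have ht0 : (0:ℝ) < t := lt_trans (by norm_num) ht.1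
    have h1t' : (0:ℝ) < 1 - t := by linarith [ht.2]
    rw [Real.norm_eq_abs, Real.norm_eq_abs, abs_mul,
      abs_of_nonneg (Real.rpow_nonneg ht0.le u), abs_of_nonneg (Real.rpow_nonneg h1t'.le v),
      abs_of_nonneg (by positivity)]
    calc t ^ u * (1 - t) ^ v ≤ (((1:ℝ)/2) ^ u + 1) * (1 - t) ^ v :=
          mul_le_mul_of_nonneg_right (hbnd u _ ht.1.le ht.2.le) (Real.rpow_nonneg h1t'.le v)
      _ = (((1:ℝ)/2) ^ u + 1) * (1 - t) ^ v := by ring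
  have cover : Ioo (0:ℝ) 1 ⊆ Ioo (0:ℝ) (1/2) ∪ Ico ((1:ℝ)/2) 1 := by
    intro t ht
    rcases lt_or_ge t (1/2) with h | h
    · exact Or.inl ⟨ht.1, h⟩
    · exact Or.inr ⟨h, ht.2⟩
  exact (left.union (right.congr_set_ae Ioo_ae_eq_Ico.symm)).mono_set cover

lemma logbnd {t c : ℝ} (ht : 0 < t) (ht1 : t < 1) (hc : 0 < c) :
    |Real.log t| ≤ t ^ (-c) / c := by
  have hlt : Real.log t < 0 := Real.log_neg ht ht1
  rw [abs_of_neg hlt]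
  have h1 : Real.log (t ^ (-c)) ≤ t ^ (-c) - 1 :=
    Real.log_le_sub_one_of_pos (Real.rpow_pos_of_pos ht _)
  rw [Real.log_rpow ht] at h1
  have h2 : (0:ℝ) < t ^ (-c) := Real.rpow_pos_of_pos ht _
  have h3 : c * (-Real.log t) ≤ t ^ (-c) := by nlinarith
  rw [div_eq_inv_mul]
  nlinarith [mul_inv_cancel₀ (ne_of_gt hc)]

lemma contOn (f : ℝ → ℝ) (hf : ∀ t ∈ Ioo (0:ℝ) 1, ContinuousWithinAt f (Ioo (0:ℝ) 1) t) :
    AEStronglyMeasurable f (volume.restrict (Ioo (0:ℝ) 1)) :=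
  ContinuousOn.aestronglyMeasurable hf measurableSet_Ioo

lemma J2 (u v : ℝ) (hu : -1 < u) (hv : -1 < v) :
    IntegrableOn (fun t : ℝ =>
      (|Real.log t| + |Real.log (1 - t)|) * (t ^ u * (1 - t) ^ v)) (Ioo (0:ℝ) 1) := by
  set c : ℝ := min (u + 1) (v + 1) / 2 with hc
  have hc0 : 0 < c := by
    have : 0 < min (u + 1) (v + 1) := lt_min (by linarith) (by linarith)
    positivity
  have hu' : -1 < u - c := by
    have : c ≤ (u + 1) / 2 := by
      rw [hc]; exact div_le_div_of_nonneg_right (min_le_left _ _) (by norm_num)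
    linarith
  have hv' : -1 < v - c := by
    have : c ≤ (v + 1) / 2 := by
      rw [hc]; exact div_le_div_of_nonneg_right (min_le_right _ _) (by norm_num)
    linarith
  have int1 := (J1 (u - c) v hu' hv).const_mul c⁻¹
  have int2 := (J1 u (v - c) hu hv').const_mul c⁻¹
  refine Integrable.mono (int1.add int2) ?_ ?_
  · apply contOn
    intro t ht
    have ht0 : t ≠ 0 := ne_of_gt ht.1
    have ht1 : (1:ℝ) - t ≠ 0 := by intro h; nlinarith [ht.2]
    have c1 : ContinuousWithinAt (fun t : ℝ => t ^ u * (1 - t) ^ v) (Ioo (0:ℝ) 1) t :=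
      ((Real.continuousAt_rpow_const t u (Or.inl ht0)).continuousWithinAt.mul
        (((continuous_const.sub continuous_id).continuousAt (x := t)).rpow_const
          (Or.inl ht1)).continuousWithinAt)
    have c2 : ContinuousWithinAt (fun t : ℝ => |Real.log t| + |Real.log (1 - t)|)
        (Ioo (0:ℝ) 1) t := by
      apply ContinuousWithinAt.add
      · exact (Real.continuousAt_log ht0).abs.continuousWithinAt
      · exact ((Real.continuousAt_log ht1).comp
          ((continuous_const.sub continuous_id).continuousAt (x := t))).abs.continuousWithinAt
    exact c2.mul c1
  · filter_upwards [ae_restrict_mem measurableSet_Ioo] with t ht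
    have ht0 : 0 < t := ht.1
    have h1t : (0:ℝ) < 1 - t := by linarith [ht.2]
    have hb1 : |Real.log t| ≤ t ^ (-c) / c := logbnd ht0 ht.2 hc0
    have hb2 : |Real.log (1 - t)| ≤ (1 - t) ^ (-c) / c := logbnd h1t (by linarith) hc0
    have hnn : (0:ℝ) ≤ t ^ u * (1 - t) ^ v := by positivity
    have hL : (0:ℝ) ≤ (|Real.log t| + |Real.log (1 - t)|) * (t ^ u * (1 - t) ^ v) :=
      mul_nonneg (add_nonneg (abs_nonneg _) (abs_nonneg _)) hnn
    have hR : (0:ℝ) ≤ c⁻¹ * (t ^ (u - c) * (1 - t) ^ v) + c⁻¹ * (t ^ u * (1 - t) ^ (v - c)) := by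
      positivity
    rw [Real.norm_eq_abs, Real.norm_eq_abs, Pi.add_apply, abs_of_nonneg hL, abs_of_nonneg hR]
    calc (|Real.log t| + |Real.log (1 - t)|) * (t ^ u * (1 - t) ^ v)
        ≤ (t ^ (-c) / c + (1 - t) ^ (-c) / c) * (t ^ u * (1 - t) ^ v) :=
          mul_le_mul_of_nonneg_right (add_le_add hb1 hb2) hnn
      _ = c⁻¹ * (t ^ (u - c) * (1 - t) ^ v) + c⁻¹ * (t ^ u * (1 - t) ^ (v - c)) := by
          rw [show u - c = -c + u by ring, show v - c = -c + v by ring,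
            Real.rpow_add ht0, Real.rpow_add h1t]
          field_simp

lemma realBeta (a b : ℝ) (ha : 0 < a) (hb : 0 < b) :
    ∫ t in Ioo (0:ℝ) 1, t ^ (a - 1) * (1 - t) ^ (b - 1) =
      Real.Gamma a * Real.Gamma b / Real.Gamma (a + b) := by
  have hC := Complex.Gamma_mul_Gamma_eq_betaIntegral
    (s := (a:ℂ)) (t := (b:ℂ)) (by simpa using ha) (by simpa using hb)
  have hbeta : Complex.betaIntegral (a:ℂ) (b:ℂ) =
      ((∫ t in Ioo (0:ℝ) 1, t ^ (a - 1) * (1 - t) ^ (b - 1) : ℝ) : ℂ) := by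
    calc Complex.betaIntegral (a:ℂ) (b:ℂ)
        = ∫ t in Ioo (0:ℝ) 1, (t:ℂ) ^ ((a:ℂ) - 1) * (1 - (t:ℂ)) ^ ((b:ℂ) - 1) := by
          rw [Complex.betaIntegral, intervalIntegral.integral_of_le (by norm_num : (0:ℝ) ≤ 1),
            integral_Ioc_eq_integral_Ioo]
      _ = ∫ t in Ioo (0:ℝ) 1, ((t ^ (a - 1) * (1 - t) ^ (b - 1) : ℝ) : ℂ) := by
          apply setIntegral_congr_fun measurableSet_Ioo
          intro t ht
          have h1 : ((t ^ (a-1) : ℝ) : ℂ) = (t:ℂ) ^ ((a:ℂ) - 1) := by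
            rw [Complex.ofReal_cpow ht.1.le]; push_cast; ring_nf
          have h2 : (((1-t) ^ (b-1) : ℝ) : ℂ) = (1 - (t:ℂ)) ^ ((b:ℂ) - 1) := by
            rw [Complex.ofReal_cpow (by linarith [ht.2] : (0:ℝ) ≤ 1 - t)]; push_cast; ring_nf
          push_cast
          rw [← h1, ← h2]
      _ = ((∫ t in Ioo (0:ℝ) 1, t ^ (a - 1) * (1 - t) ^ (b - 1) : ℝ) : ℂ) :=
          integral_ofReal
  rw [hbeta, ← Complex.ofReal_add, Complex.Gamma_ofReal, Complex.Gamma_ofReal,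
    Complex.Gamma_ofReal, ← Complex.ofReal_mul, ← Complex.ofReal_mul] at hC
  have heq := Complex.ofReal_inj.mp hC
  have hne : Real.Gamma (a + b) ≠ 0 := (Real.Gamma_pos_of_pos (by linarith)).ne'
  field_simp
  linarith [heq]

lemma density_transform (θ1 θ2 t : ℝ) (ht : t ∈ Ioo (0:ℝ) 1) :
    betaLogisticPDF θ1 θ2 (Real.log (t / (1 - t)) / 2) =
      2 * (t ^ ((θ1 + θ2) / 2) * (1 - t) ^ ((θ1 - θ2) / 2)) *
        (Real.Gamma θ1 / (Real.Gamma ((θ1 - θ2) / 2) * Real.Gamma ((θ1 + θ2) / 2))) := by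
  obtain ⟨ht0, ht1⟩ := ht
  have h1t : (0:ℝ) < 1 - t := by linarith
  have hu : (0:ℝ) < t / (1 - t) := div_pos ht0 h1t
  set x : ℝ := Real.log (t / (1 - t)) / 2 with hx
  set P : ℝ := t ^ ((2:ℝ)⁻¹) with hP
  set Q : ℝ := (1 - t) ^ ((2:ℝ)⁻¹) with hQ
  have hP0 : 0 < P := Real.rpow_pos_of_pos ht0 _
  have hQ0 : 0 < Q := Real.rpow_pos_of_pos h1t _
  have hPP : P * P = t := by
    rw [hP, ← Real.rpow_add ht0]; norm_num
  have hQQ : Q * Q = 1 - t := by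
    rw [hQ, ← Real.rpow_add h1t]; norm_num
  have hrw : ∀ y : ℝ, (t / (1 - t)) ^ y = t ^ y / (1 - t) ^ y :=
    fun y => Real.div_rpow ht0.le h1t.le y
  have hex : Real.exp x = P / Q := by
    rw [hx, show Real.log (t / (1-t)) / 2 = Real.log (t / (1-t)) * (2:ℝ)⁻¹ by ring,
      ← Real.rpow_def_of_pos hu, hrw]
  have hexneg : Real.exp (-x) = Q / P := by
    rw [Real.exp_neg, hex]
    field_simp
  have hsum : P * P + Q * Q = 1 := by rw [hPP, hQQ]; ring
  have hcosh : Real.cosh x = 1 / (2 * (P * Q)) := by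
    rw [Real.cosh_eq, hex, hexneg]
    field_simp
    linear_combination hsum
  have hsech : sech x = 2 * (P * Q) := by
    rw [sech, hcosh]
    field_simp
  have hsech_pow : sech x ^ θ1 = 2 ^ θ1 * (t ^ (θ1 / 2) * (1 - t) ^ (θ1 / 2)) := by
    rw [hsech, Real.mul_rpow (by norm_num) (by positivity),
      Real.mul_rpow hP0.le hQ0.le, hP, hQ,
      show θ1 / 2 = 2⁻¹ * θ1 by ring, Real.rpow_mul ht0.le, Real.rpow_mul h1t.le]
  have hexp2 : Real.exp (θ2 * x) = t ^ (θ2 / 2) / (1 - t) ^ (θ2 / 2) := by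
    rw [hx, show θ2 * (Real.log (t/(1-t)) / 2) = Real.log (t/(1-t)) * (θ2/2) by ring,
      ← Real.rpow_def_of_pos hu, hrw]
  have h2pow : (2:ℝ) ^ (1 - θ1) * 2 ^ θ1 = 2 := by
    rw [← Real.rpow_add (by norm_num : (0:ℝ) < 2)]; norm_num
  have key : (2:ℝ) ^ (1 - θ1) * (2 ^ θ1 * (t ^ (θ1/2) * (1 - t) ^ (θ1/2))) *
      (t ^ (θ2/2) * (1 - t) ^ (-(θ2/2))) =
      2 * (t ^ ((θ1 + θ2) / 2) * (1 - t) ^ ((θ1 - θ2) / 2)) := by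
    calc (2:ℝ) ^ (1 - θ1) * (2 ^ θ1 * (t ^ (θ1/2) * (1 - t) ^ (θ1/2))) *
        (t ^ (θ2/2) * (1 - t) ^ (-(θ2/2)))
        = ((2:ℝ) ^ (1 - θ1) * 2 ^ θ1) * ((t ^ (θ1/2) * t ^ (θ2/2)) *
            ((1 - t) ^ (θ1/2) * (1 - t) ^ (-(θ2/2)))) := by ring
      _ = 2 * (t ^ ((θ1 + θ2) / 2) * (1 - t) ^ ((θ1 - θ2) / 2)) := by
          rw [h2pow, ← Real.rpow_add ht0, ← Real.rpow_add h1t]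
          ring_nf
  rw [betaLogisticPDF, hsech_pow, hexp2, div_eq_mul_inv (t ^ (θ2/2)),
    ← Real.rpow_neg h1t.le, key, div_div_eq_mul_div, mul_div_assoc]

lemma subst_integral (F : ℝ → ℝ) :
    (∫ x : ℝ, F x) =
      ∫ t in Ioo (0:ℝ) 1, ((t⁻¹ + (1 - t)⁻¹) / 2) * F (Real.log (t / (1 - t)) / 2) := by
  set φ : ℝ → ℝ := fun t => Real.log (t / (1 - t)) / 2 with hφ
  have hpos : ∀ t ∈ Ioo (0:ℝ) 1, 0 < t / (1 - t) := fun t ht =>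
    div_pos ht.1 (by linarith [ht.2])
  have hderiv : ∀ t ∈ Ioo (0:ℝ) 1,
      HasDerivWithinAt φ ((t⁻¹ + (1 - t)⁻¹) / 2) (Ioo 0 1) t := by
    intro t ht
    have ht0 : (0:ℝ) < t := ht.1
    have h1t : (0:ℝ) < 1 - t := by linarith [ht.2]
    have h := (((hasDerivAt_id t).div ((hasDerivAt_const t (1:ℝ)).sub (hasDerivAt_id t))
      h1t.ne').log (hpos t ht).ne').div_const 2
    simp only [Pi.div_apply, Pi.sub_apply, id_eq] at h
    have heq : (1 * (1 - t) - t * (0 - 1)) / (1 - t) ^ 2 / (t / (1 - t)) / 2 =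
        (t⁻¹ + (1 - t)⁻¹) / 2 := by
      field_simp
      ring
    rw [heq] at h
    exact h.hasDerivWithinAt
  have hinj : InjOn φ (Ioo 0 1) := by
    intro s hs t ht h
    have hus := hpos s hs
    have hut := hpos t ht
    have : s / (1 - s) = t / (1 - t) := by
      have hl : Real.log (s / (1 - s)) = Real.log (t / (1 - t)) := by
        have := congrArg (fun z => z * 2) h
        simpa [hφ] using this
      exact Real.log_injOn_pos (mem_Ioi.mpr hus) (mem_Ioi.mpr hut) hl
    have h1s : (0:ℝ) < 1 - s := by linarith [hs.2]
    have h1t : (0:ℝ) < 1 - t := by linarith [ht.2]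
    field_simp at this
    nlinarith
  have himg : φ '' Ioo 0 1 = univ := by
    apply eq_univ_of_forall
    intro x
    have hE : (0:ℝ) < Real.exp (2 * x) := Real.exp_pos _
    set E := Real.exp (2 * x) with hEdef
    refine ⟨E / (1 + E), ⟨div_pos hE (by linarith), (div_lt_one (by linarith)).mpr (by linarith)⟩, ?_⟩
    have hne : (1:ℝ) + E ≠ 0 := by positivity
    have hq : E / (1 + E) / (1 - E / (1 + E)) = E := by
      field_simp
      ring
    show Real.log (E / (1 + E) / (1 - E / (1 + E))) / 2 = x
    rw [hq, hEdef, Real.log_exp]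
    ring
  have := integral_image_eq_integral_abs_deriv_smul measurableSet_Ioo hderiv hinj F
  rw [himg, Measure.restrict_univ] at this
  rw [this]
  apply setIntegral_congr_fun measurableSet_Ioo
  intro t ht
  have ht0 : (0:ℝ) < t := ht.1
  have h1t : (0:ℝ) < 1 - t := by linarith [ht.2]
  have : (0:ℝ) < (t⁻¹ + (1 - t)⁻¹) / 2 := by positivity
  simp [abs_of_pos this, smul_eq_mul]
  exact Or.inl rfl

lemma measAux (u v : ℝ) : AEStronglyMeasurable (fun t : ℝ => t ^ u * (1 - t) ^ v)
    (volume.restrict (Ioo (0:ℝ) 1)) := by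
  apply ContinuousOn.aestronglyMeasurable _ measurableSet_Ioo
  intro t ht
  have ht0 : t ≠ 0 := ne_of_gt ht.1
  have ht1 : (1:ℝ) - t ≠ 0 := by intro h; nlinarith [ht.2]
  exact ((Real.continuousAt_rpow_const t u (Or.inl ht0)).continuousWithinAt.mul
    (((continuous_const.sub continuous_id).continuousAt (x := t)).rpow_const
      (Or.inl ht1)).continuousWithinAt)

lemma measAux2 (u v : ℝ) : AEStronglyMeasurable
    (fun t : ℝ => ((Real.log t - Real.log (1 - t)) / 2) * (t ^ u * (1 - t) ^ v))
    (volume.restrict (Ioo (0:ℝ) 1)) := by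
  apply ContinuousOn.aestronglyMeasurable _ measurableSet_Ioo
  intro t ht
  have ht0 : t ≠ 0 := ne_of_gt ht.1
  have ht1 : (1:ℝ) - t ≠ 0 := by intro h; nlinarith [ht.2]
  refine ContinuousWithinAt.mul ?_ ?_
  · exact (((Real.continuousAt_log ht0).sub ((Real.continuousAt_log ht1).comp
      ((continuous_const.sub continuous_id).continuousAt (x := t)))).div_const 2).continuousWithinAt
  · exact ((Real.continuousAt_rpow_const t u (Or.inl ht0)).continuousWithinAt.mul
      (((continuous_const.sub continuous_id).continuousAt (x := t)).rpow_const
        (Or.inl ht1)).continuousWithinAt)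

lemma hasDerivAt_rpow_exp_aff {t : ℝ} (ht : 0 < t) (c d s : ℝ) :
    HasDerivAt (fun s : ℝ => t ^ (c * s + d)) (c * Real.log t * t ^ (c * s + d)) s := by
  have h1 : HasDerivAt (fun s : ℝ => Real.log t * (c * s + d)) (Real.log t * c) s := by
    simpa using (((hasDerivAt_id s).const_mul c).add_const d).const_mul (Real.log t)
  have h2 := h1.exp
  have heq : (fun s : ℝ => Real.exp (Real.log t * (c * s + d))) =
      fun s : ℝ => t ^ (c * s + d) := by
    funext s
    rw [← Real.rpow_def_of_pos ht]
  have h3 : HasDerivAt (fun s : ℝ => t ^ (c * s + d))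
      (Real.exp (Real.log t * (c * s + d)) * (Real.log t * c)) s := heq ▸ h2
  rw [← Real.rpow_def_of_pos ht] at h3
  convert h3 using 1
  ring

lemma hasDerivAt_H (θ1 θ2 : ℝ) (h1 : 0 < θ1 + θ2) (h2 : 0 < θ1 - θ2) :
    HasDerivAt (fun s => ∫ t in Ioo (0:ℝ) 1, t ^ ((θ1 + s) / 2 - 1) * (1 - t) ^ ((θ1 - s) / 2 - 1))
      (∫ t in Ioo (0:ℝ) 1, ((Real.log t - Real.log (1 - t)) / 2) *
        (t ^ ((θ1 + θ2) / 2 - 1) * (1 - t) ^ ((θ1 - θ2) / 2 - 1))) θ2 := by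
  set a : ℝ := (θ1 - θ2) / 2 with ha
  set b : ℝ := (θ1 + θ2) / 2 with hb
  have ha0 : 0 < a := by rw [ha]; linarith
  have hb0 : 0 < b := by rw [hb]; linarith
  set ε : ℝ := min a b with hε
  have hε0 : 0 < ε := lt_min ha0 hb0
  set u0 : ℝ := b - ε / 2 - 1 with hu0
  set v0 : ℝ := a - ε / 2 - 1 with hv0
  have hu0' : -1 < u0 := by
    have : ε ≤ b := min_le_right _ _
    rw [hu0]; linarith
  have hv0' : -1 < v0 := by
    have : ε ≤ a := min_le_left _ _
    rw [hv0]; linarith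
  set F : ℝ → ℝ → ℝ := fun s t => t ^ ((θ1 + s) / 2 - 1) * (1 - t) ^ ((θ1 - s) / 2 - 1) with hF
  set F' : ℝ → ℝ → ℝ := fun s t => ((Real.log t - Real.log (1 - t)) / 2) *
    (t ^ ((θ1 + s) / 2 - 1) * (1 - t) ^ ((θ1 - s) / 2 - 1)) with hF'
  set bound : ℝ → ℝ := fun t =>
    (1/2) * ((|Real.log t| + |Real.log (1 - t)|) * (t ^ u0 * (1 - t) ^ v0)) with hbound
  have key := hasDerivAt_integral_of_dominated_loc_of_deriv_le (μ := volume.restrict (Ioo (0:ℝ) 1))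
    (F := F) (F' := F') (x₀ := θ2) (bound := bound) (Metric.ball_mem_nhds θ2 hε0)
    (Filter.Eventually.of_forall fun s => measAux _ _)
    (J1 _ _ (by rw [hb] at hb0; linarith) (by rw [ha] at ha0; linarith))
    (measAux2 _ _)
    ?_ ((J2 u0 v0 hu0' hv0').const_mul (1/2)) ?_
  · exact key.2
  · -- bound
    filter_upwards [ae_restrict_mem measurableSet_Ioo] with t ht s hs
    have ht0 : (0:ℝ) < t := ht.1
    have h1t : (0:ℝ) < 1 - t := by linarith [ht.2]
    have hs' : |s - θ2| < ε := by rwa [Metric.mem_ball, Real.dist_eq] at hs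
    have he1 : u0 ≤ (θ1 + s) / 2 - 1 := by
      have := abs_lt.mp hs'
      rw [hu0, hb]; linarith [this.1]
    have he2 : v0 ≤ (θ1 - s) / 2 - 1 := by
      have := abs_lt.mp hs'
      rw [hv0, ha]; linarith [this.2]
    have hp1 : t ^ ((θ1 + s) / 2 - 1) ≤ t ^ u0 :=
      Real.rpow_le_rpow_of_exponent_ge ht0 ht.2.le he1
    have hp2 : (1 - t) ^ ((θ1 - s) / 2 - 1) ≤ (1 - t) ^ v0 :=
      Real.rpow_le_rpow_of_exponent_ge h1t (by linarith [ht0]) he2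
    rw [hF', Real.norm_eq_abs, abs_mul, hbound]
    have habs : |(Real.log t - Real.log (1 - t)) / 2| ≤
        (1/2) * (|Real.log t| + |Real.log (1 - t)|) := by
      rw [abs_div]
      have := abs_sub (Real.log t) (Real.log (1 - t))
      rw [abs_of_pos (by norm_num : (0:ℝ) < 2)]
      linarith [abs_sub_abs_le_abs_sub (Real.log t) (Real.log (1 - t)),
        abs_sub (Real.log t) (Real.log (1 - t))]
    have hprod : |t ^ ((θ1 + s) / 2 - 1) * (1 - t) ^ ((θ1 - s) / 2 - 1)| ≤
        t ^ u0 * (1 - t) ^ v0 := by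
      rw [abs_of_nonneg (by positivity)]
      exact mul_le_mul hp1 hp2 (by positivity) (by positivity)
    calc |(Real.log t - Real.log (1 - t)) / 2| * |t ^ ((θ1 + s) / 2 - 1) * (1 - t) ^ ((θ1 - s) / 2 - 1)|
        ≤ (1/2) * (|Real.log t| + |Real.log (1 - t)|) * (t ^ u0 * (1 - t) ^ v0) :=
          mul_le_mul habs hprod (abs_nonneg _) (by positivity)
      _ = (1/2) * ((|Real.log t| + |Real.log (1 - t)|) * (t ^ u0 * (1 - t) ^ v0)) := by ring
  · -- differentiability
    filter_upwards [ae_restrict_mem measurableSet_Ioo] with t ht s _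
    have ht0 : (0:ℝ) < t := ht.1
    have h1t : (0:ℝ) < 1 - t := by linarith [ht.2]
    have d1 : HasDerivAt (fun s : ℝ => t ^ ((θ1 + s) / 2 - 1))
        ((Real.log t / 2) * t ^ ((θ1 + s) / 2 - 1)) s := by
      have := hasDerivAt_rpow_exp_aff ht0 (1/2) (θ1/2 - 1) s
      have heq : (fun s : ℝ => t ^ ((1:ℝ)/2 * s + (θ1/2 - 1))) =
          fun s : ℝ => t ^ ((θ1 + s) / 2 - 1) := by
        funext s; congr 1; ring
      rw [heq] at this
      convert this using 1
      rw [show (1:ℝ)/2 * s + (θ1/2 - 1) = (θ1 + s) / 2 - 1 by ring]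
      ring
    have d2 : HasDerivAt (fun s : ℝ => (1 - t) ^ ((θ1 - s) / 2 - 1))
        ((-(Real.log (1 - t)) / 2) * (1 - t) ^ ((θ1 - s) / 2 - 1)) s := by
      have := hasDerivAt_rpow_exp_aff h1t (-(1/2)) (θ1/2 - 1) s
      have heq : (fun s : ℝ => (1 - t) ^ (-((1:ℝ)/2) * s + (θ1/2 - 1))) =
          fun s : ℝ => (1 - t) ^ ((θ1 - s) / 2 - 1) := by
        funext s; congr 1; ring
      rw [heq] at this
      convert this using 1
      rw [show -((1:ℝ)/2) * s + (θ1/2 - 1) = (θ1 - s) / 2 - 1 by ring]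
      ring
    exact (d1.mul d2).congr_deriv (by rw [hF']; ring)

/-- The mean of the beta-logistic distribution is
`(1/2) (ψ((θ¹+θ²)/2) − ψ((θ¹−θ²)/2))`. -/
theorem betaLogistic_mean (θ1 θ2 : ℝ) (h1 : 0 < θ1 + θ2) (h2 : 0 < θ1 - θ2) :
    (∫ x : ℝ, x * betaLogisticPDF θ1 θ2 x) =
      (1 / 2) * (digamma ((θ1 + θ2) / 2) - digamma ((θ1 - θ2) / 2)) := by
  have ha0 : (0:ℝ) < (θ1 - θ2) / 2 := by linarith
  have hb0 : (0:ℝ) < (θ1 + θ2) / 2 := by linarith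
  have hA : 0 < Real.Gamma ((θ1 - θ2) / 2) := Real.Gamma_pos_of_pos ha0
  have hB : 0 < Real.Gamma ((θ1 + θ2) / 2) := Real.Gamma_pos_of_pos hb0
  have hG : 0 < Real.Gamma θ1 := Real.Gamma_pos_of_pos (by linarith)
  -- Step A: substitution
  have stepA : (∫ x : ℝ, x * betaLogisticPDF θ1 θ2 x) =
      (∫ t in Ioo (0:ℝ) 1, ((Real.log t - Real.log (1 - t)) / 2) *
        (t ^ ((θ1 + θ2) / 2 - 1) * (1 - t) ^ ((θ1 - θ2) / 2 - 1))) *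
      (Real.Gamma θ1 / (Real.Gamma ((θ1 - θ2) / 2) * Real.Gamma ((θ1 + θ2) / 2))) := by
    rw [subst_integral (fun x => x * betaLogisticPDF θ1 θ2 x), ← integral_mul_const]
    apply setIntegral_congr_fun measurableSet_Ioo
    intro t ht
    have ht0 : (0:ℝ) < t := ht.1
    have h1t : (0:ℝ) < 1 - t := by linarith [ht.2]
    simp only
    rw [density_transform θ1 θ2 t ht, Real.log_div ht0.ne' h1t.ne',
      Real.rpow_sub ht0, Real.rpow_sub h1t, Real.rpow_one]
    field_simp
    simp only [Real.rpow_one, pow_one]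
    ring
  rw [stepA]
  -- Step B: identify the integral with the derivative of the Beta function
  set D : ℝ := ∫ t in Ioo (0:ℝ) 1, ((Real.log t - Real.log (1 - t)) / 2) *
    (t ^ ((θ1 + θ2) / 2 - 1) * (1 - t) ^ ((θ1 - θ2) / 2 - 1)) with hD
  have hH := hasDerivAt_H θ1 θ2 h1 h2
  -- Gamma derivatives
  have hΓb : HasDerivAt Real.Gamma (deriv Real.Gamma ((θ1 + θ2) / 2)) ((θ1 + θ2) / 2) :=
    (Real.differentiableAt_Gamma (fun m => by
      have : (0:ℝ) ≤ m := Nat.cast_nonneg m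
      intro hm; rw [hm] at hb0; linarith)).hasDerivAt
  have hΓa : HasDerivAt Real.Gamma (deriv Real.Gamma ((θ1 - θ2) / 2)) ((θ1 - θ2) / 2) :=
    (Real.differentiableAt_Gamma (fun m => by
      have : (0:ℝ) ≤ m := Nat.cast_nonneg m
      intro hm; rw [hm] at ha0; linarith)).hasDerivAt
  have hib : HasDerivAt (fun s : ℝ => (θ1 + s) / 2) (1/2 : ℝ) θ2 := by
    simpa using ((hasDerivAt_id θ2).const_add θ1).div_const 2
  have hia : HasDerivAt (fun s : ℝ => (θ1 - s) / 2) (-(1/2) : ℝ) θ2 := by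
    have h := ((hasDerivAt_id θ2).const_sub θ1).div_const 2
    simp only [id_eq] at h
    exact h.congr_deriv (by norm_num)
  have dB : HasDerivAt (fun s : ℝ => Real.Gamma ((θ1 + s) / 2))
      (deriv Real.Gamma ((θ1 + θ2) / 2) * (1/2)) θ2 := by have := hΓb.comp θ2 hib; exact this
  have dA : HasDerivAt (fun s : ℝ => Real.Gamma ((θ1 - s) / 2))
      (deriv Real.Gamma ((θ1 - θ2) / 2) * (-(1/2))) θ2 := by have := hΓa.comp θ2 hia; exact this
  have dK : HasDerivAt (fun s : ℝ => Real.Gamma ((θ1 + s) / 2) * Real.Gamma ((θ1 - s) / 2)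
        / Real.Gamma θ1)
      ((deriv Real.Gamma ((θ1 + θ2) / 2) * (1/2) * Real.Gamma ((θ1 - θ2) / 2) +
        Real.Gamma ((θ1 + θ2) / 2) * (deriv Real.Gamma ((θ1 - θ2) / 2) * (-(1/2)))) /
        Real.Gamma θ1) θ2 := (dB.mul dA).div_const _
  -- the two functions agree near θ2
  have hEq : (fun s => ∫ t in Ioo (0:ℝ) 1,
        t ^ ((θ1 + s) / 2 - 1) * (1 - t) ^ ((θ1 - s) / 2 - 1)) =ᶠ[nhds θ2]
      (fun s : ℝ => Real.Gamma ((θ1 + s) / 2) * Real.Gamma ((θ1 - s) / 2) / Real.Gamma θ1) := by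
    have hball : Metric.ball θ2 (min ((θ1 - θ2)/2) ((θ1 + θ2)/2)) ∈ nhds θ2 :=
      Metric.ball_mem_nhds _ (lt_min ha0 hb0)
    filter_upwards [hball] with s hs
    rw [Metric.mem_ball, Real.dist_eq] at hs
    have habs := abs_lt.mp hs
    have hp : (0:ℝ) < (θ1 + s) / 2 := by
      have := min_le_left ((θ1 - θ2)/2) ((θ1 + θ2)/2)
      have := min_le_right ((θ1 - θ2)/2) ((θ1 + θ2)/2)
      linarith [habs.1]
    have hq : (0:ℝ) < (θ1 - s) / 2 := by
      have := min_le_left ((θ1 - θ2)/2) ((θ1 + θ2)/2)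
      linarith [habs.2]
    rw [realBeta _ _ hp hq, show (θ1 + s) / 2 + (θ1 - s) / 2 = θ1 by ring]
  have hD' : D = (deriv Real.Gamma ((θ1 + θ2) / 2) * (1/2) * Real.Gamma ((θ1 - θ2) / 2) +
      Real.Gamma ((θ1 + θ2) / 2) * (deriv Real.Gamma ((θ1 - θ2) / 2) * (-(1/2)))) /
      Real.Gamma θ1 :=
    hH.unique (dK.congr_of_eventuallyEq hEq)
  -- digamma values
  have hψb : digamma ((θ1 + θ2) / 2) =
      deriv Real.Gamma ((θ1 + θ2) / 2) / Real.Gamma ((θ1 + θ2) / 2) :=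
    (hΓb.log hB.ne').deriv
  have hψa : digamma ((θ1 - θ2) / 2) =
      deriv Real.Gamma ((θ1 - θ2) / 2) / Real.Gamma ((θ1 - θ2) / 2) :=
    (hΓa.log hA.ne').deriv
  rw [hD', hψb, hψa]
  field_simp
  ring
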